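/- Let N be a proper submodule of M. (i) If for every m ∈ M \ N the ideal (N :_R m) is a weakly 1-absorbing prime ideal of R, then N is a weakly classical 1-absorbing prime submodule of M. (ii) Conversely, if N is a weakly classical 1-absorbing prime submodule of M and m ∈ M \ N is an element with Ann_R(m) = 0, then (N :_R m) is a weakly 1-absorbing prime ideal of R. -/
import Mathlib


/-- A proper submodule `N` of `M` is weakly classical 1-absorbing prime if whenever
`abcm ∈ N` and `abcm ≠ 0` for nonunits `a, b, c ∈ R` and `m ∈ M`, then `abm ∈ N` or `cm ∈ N`. -/
def IsWeaklyClassical1AbsorbingPrime {R : Type*} [CommRing R] {M : Type*} [AddCommGroup M]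
    [Module R M] (N : Submodule R M) : Prop :=
  N ≠ ⊤ ∧ ∀ a b c : R, ∀ m : M, ¬ IsUnit a → ¬ IsUnit b → ¬ IsUnit c →
    (a * b * c) • m ∈ N → (a * b * c) • m ≠ 0 → ((a * b) • m ∈ N ∨ c • m ∈ N)

/-- A proper ideal `I` of `R` is weakly 1-absorbing prime if whenever `abc ∈ I` and
`abc ≠ 0` for nonunits `a, b, c ∈ R`, then `ab ∈ I` or `c ∈ I`. -/
def IsWeakly1AbsorbingPrimeIdeal {R : Type*} [CommRing R] (I : Ideal R) : Prop :=
  I ≠ ⊤ ∧ ∀ a b c : R, ¬ IsUnit a → ¬ IsUnit b → ¬ IsUnit c →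
    a * b * c ∈ I → a * b * c ≠ 0 → (a * b ∈ I ∨ c ∈ I)

/-- (i) If `(N :_R m)` is a weakly 1-absorbing prime ideal for every
`m ∈ M \ N`, then `N` is weakly classical 1-absorbing prime. (ii) Conversely, if `N` is
weakly classical 1-absorbing prime and `m ∈ M \ N` has zero annihilator, then `(N :_R m)`
is a weakly 1-absorbing prime ideal. -/
theorem stmt_0 {R : Type*} [CommRing R] [Nontrivial R] {M : Type*} [AddCommGroup M]
    [Module R M] [Nontrivial M] (N : Submodule R M) (hN : N ≠ ⊤) :
    ((∀ m : M, m ∉ N →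
        IsWeakly1AbsorbingPrimeIdeal (Submodule.comap (LinearMap.toSpanSingleton R M m) N)) →
      IsWeaklyClassical1AbsorbingPrime N) ∧
    (IsWeaklyClassical1AbsorbingPrime N →
      ∀ m : M, m ∉ N → (∀ x : R, x • m = 0 → x = 0) →
        IsWeakly1AbsorbingPrimeIdeal (Submodule.comap (LinearMap.toSpanSingleton R M m) N)) := by
  constructor
  · intro h
    refine ⟨hN, fun a b c m ha hb hc habc hne => ?_⟩
    by_cases hm : m ∈ N
    · exact Or.inr (N.smul_mem c hm)
    · obtain ⟨-, h2⟩ := h m hm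
      have hmem : a * b * c ∈ Submodule.comap (LinearMap.toSpanSingleton R M m) N := by
        simpa [LinearMap.toSpanSingleton_apply] using habc
      have hnz : a * b * c ≠ 0 := fun h => hne (by rw [h, zero_smul])
      rcases h2 a b c ha hb hc hmem hnz with h' | h'
      · exact Or.inl (by simpa [LinearMap.toSpanSingleton_apply] using h')
      · exact Or.inr (by simpa [LinearMap.toSpanSingleton_apply] using h')
  · intro hwc m hm hann
    refine ⟨?_, fun a b c ha hb hc habc hnz => ?_⟩
    · intro htop
      have : (1 : R) ∈ Submodule.comap (LinearMap.toSpanSingleton R M m) N := htop ▸ trivial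
      simp [LinearMap.toSpanSingleton_apply] at this
      exact hm this
    · have hmem : (a * b * c) • m ∈ N := by
        simpa [LinearMap.toSpanSingleton_apply] using habc
      have hne : (a * b * c) • m ≠ 0 := fun h => hnz (hann _ h)
      rcases hwc.2 a b c m ha hb hc hmem hne with h' | h'
      · exact Or.inl (by simpa [LinearMap.toSpanSingleton_apply] using h')
      · exact Or.inr (by simpa [LinearMap.toSpanSingleton_apply] using h')
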